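/- The Baldwin voting method violates positive involvement: there exists a profile P, a candidate x ∈ Baldwin(P), and a profile P' obtained from P by adding one new voter whose ballot ranks x in first place, such that x ∉ Baldwin(P'). (A witness: P is the 6-voter profile on candidates {a,b,c,d} with ballots badc, cbda, cbda, dacb, dbac, acbd, in which Baldwin(P) = {c}; adding a voter with ballot cabd yields Baldwin(P') = {a}.) -/

import Mathlib

open scoped Classical

/-- `r` is a strict linear order on the finite set `X`, relating only members of `X`. -/
def IsLinOn (X : Finset ℕ) (r : ℕ → ℕ → Prop) : Prop :=
  (∀ a b, r a b → a ∈ X ∧ b ∈ X) ∧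
  (∀ a, ¬ r a a) ∧
  (∀ a b c, r a b → r b c → r a c) ∧
  (∀ a ∈ X, ∀ b ∈ X, a ≠ b → r a b ∨ r b a)

/-- A profile assigns to each voter in a nonempty finite set of voters a strict linear
order (ballot) on a nonempty finite set of candidates.  Voters and candidates are both
drawn from the infinite set `ℕ`. -/
structure Profile where
  voters : Finset ℕ
  cands : Finset ℕ
  voters_nonempty : voters.Nonempty
  cands_nonempty : cands.Nonempty
  ballot : ℕ → ℕ → ℕ → Prop
  ballot_lin : ∀ i ∈ voters, IsLinOn cands (ballot i)

/-- `F` is a voting method: it assigns to each profile a nonempty set of winners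
among the candidates of the profile. -/
def VotingMethod (F : Profile → Finset ℕ) : Prop :=
  ∀ P : Profile, (F P).Nonempty ∧ F P ⊆ P.cands

/-- The ballot `r` ranks `x` in first place among the candidates in `X`. -/
def RanksFirst (X : Finset ℕ) (r : ℕ → ℕ → Prop) (x : ℕ) : Prop :=
  x ∈ X ∧ ∀ y ∈ X, y ≠ x → r x y

/-- `P'` is obtained from `P` by adding one new voter `j` whose ballot ranks `x` in
first place. -/
def AddVoter (P P' : Profile) (j x : ℕ) : Prop :=
  P'.cands = P.cands ∧ j ∉ P.voters ∧ P'.voters = insert j P.voters ∧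
  (∀ i ∈ P.voters, ∀ a b, (P'.ballot i a b ↔ P.ballot i a b)) ∧
  RanksFirst P.cands (P'.ballot j) x

/-- `F` satisfies positive involvement (PI). -/
def SatisfiesPI (F : Profile → Finset ℕ) : Prop :=
  ∀ (P P' : Profile) (j x : ℕ), x ∈ F P → AddVoter P P' j x → x ∈ F P'

/-- The Borda score of `x` in the profile `P` restricted to the candidates in `Y`
(for each ballot, the number of candidates in `Y` ranked below `x`, which equals
`|Y| - Rank(x)`). -/
noncomputable def bordaInY (P : Profile) (Y : Finset ℕ) (x : ℕ) : ℕ :=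
  ∑ i ∈ P.voters, (Y.filter (fun b => P.ballot i x b)).card

/-- The `n`-th stage of the Baldwin elimination process: while more than one candidate
remains, remove all remaining candidates with the smallest Borda score (computed in the
restricted profile), unless all remaining candidates are tied (in which case stop). -/
noncomputable def baldwinStage (P : Profile) : ℕ → Finset ℕ
  | 0 => P.cands
  | n + 1 =>
    let Y := baldwinStage P n
    if Y.card ≤ 1 then Y
    else
      let L := Y.filter (fun x => ∀ y ∈ Y, bordaInY P Y x ≤ bordaInY P Y y)
      if L = Y then Y else Y \ L

/-- The Baldwin winners (the elimination process stabilizes after at most `|X(P)|` stages). -/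
noncomputable def Baldwin (P : Profile) : Finset ℕ := baldwinStage P P.cands.card

-- auxiliary
def blist : ℕ → List ℕ
  | 0 => [1,0,3,2]
  | 1 => [2,1,3,0]
  | 2 => [2,1,3,0]
  | 3 => [3,0,2,1]
  | 4 => [3,1,0,2]
  | 5 => [0,2,1,3]
  | _ => [2,0,1,3]

def bal (i a b : ℕ) : Prop :=
  a ∈ blist i ∧ b ∈ blist i ∧ (blist i).idxOf a < (blist i).idxOf b

instance (i a b : ℕ) : Decidable (bal i a b) := by unfold bal; infer_instance

lemma isLinOn_bal (X : Finset ℕ) (i : ℕ)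
    (h : ∀ a, a ∈ X ↔ a ∈ blist i) :
    IsLinOn X (fun a b => bal i a b) := by
  refine ⟨fun a b hab => ⟨(h a).2 hab.1, (h b).2 hab.2.1⟩,
    fun a ha => lt_irrefl _ ha.2.2,
    fun a b c hab hbc => ⟨hab.1, hbc.2.1, lt_trans hab.2.2 hbc.2.2⟩,
    fun a ha b hb hne => ?_⟩
  have ha' := (h a).1 ha
  have hb' := (h b).1 hb
  rcases lt_trichotomy ((blist i).idxOf a) ((blist i).idxOf b) with hlt | heq | hgt
  · exact Or.inl ⟨ha', hb', hlt⟩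
  · exact absurd ((List.idxOf_inj ha').1 heq) hne
  · exact Or.inr ⟨hb', ha', hgt⟩

lemma mem_iff_blist (i : ℕ) (hi : i ≤ 6) (a : ℕ) :
    a ∈ ({0,1,2,3} : Finset ℕ) ↔ a ∈ blist i := by
  interval_cases i <;> simp [blist] <;> omega

def Pbase : Profile where
  voters := {0,1,2,3,4,5}
  cands := {0,1,2,3}
  voters_nonempty := by decide
  cands_nonempty := by decide
  ballot := fun i a b => bal i a b
  ballot_lin := by
    intro i hi
    apply isLinOn_bal
    apply mem_iff_blist
    fin_cases hi <;> norm_num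

def Pnew : Profile where
  voters := {6,0,1,2,3,4,5}
  cands := {0,1,2,3}
  voters_nonempty := by decide
  cands_nonempty := by decide
  ballot := fun i a b => bal i a b
  ballot_lin := by
    intro i hi
    apply isLinOn_bal
    apply mem_iff_blist
    fin_cases hi <;> norm_num

def bordaC (V Y : Finset ℕ) (x : ℕ) : ℕ :=
  ∑ i ∈ V, (Y.filter (fun b => bal i x b)).card

lemma borda_base (Y : Finset ℕ) (x : ℕ) :
    bordaInY Pbase Y x = bordaC Pbase.voters Y x := by
  simp [bordaInY, bordaC, Pbase, Finset.filter_congr_decidable]; congr! <;> funext s <;> congr 1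

lemma borda_new (Y : Finset ℕ) (x : ℕ) :
    bordaInY Pnew Y x = bordaC Pnew.voters Y x := by
  simp [bordaInY, bordaC, Pnew, Finset.filter_congr_decidable]; congr! <;> funext s <;> congr 1

example : baldwinStage Pbase 0 = ({0,1,2,3} : Finset ℕ) := rfl

lemma stage_b1 : baldwinStage Pbase 1 = ({1,2,3} : Finset ℕ) := by
  rw [show (1:ℕ) = 0 + 1 from rfl, baldwinStage]
  simp only [show baldwinStage Pbase 0 = ({0,1,2,3} : Finset ℕ) from rfl, borda_base]
  decide

lemma stage_b2 : baldwinStage Pbase 2 = ({1,2} : Finset ℕ) := by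
  rw [show (2:ℕ) = 1 + 1 from rfl, baldwinStage]
  simp only [stage_b1, borda_base]
  decide

lemma stage_b3 : baldwinStage Pbase 3 = ({2} : Finset ℕ) := by
  rw [show (3:ℕ) = 2 + 1 from rfl, baldwinStage]
  simp only [stage_b2, borda_base]
  decide

lemma stage_b4 : baldwinStage Pbase 4 = ({2} : Finset ℕ) := by
  rw [show (4:ℕ) = 3 + 1 from rfl, baldwinStage]
  simp only [stage_b3]
  decide

lemma stage_n1 : baldwinStage Pnew 1 = ({0,1,2} : Finset ℕ) := by
  rw [show (1:ℕ) = 0 + 1 from rfl, baldwinStage]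
  simp only [show baldwinStage Pnew 0 = ({0,1,2,3} : Finset ℕ) from rfl, borda_new]
  decide

lemma stage_n2 : baldwinStage Pnew 2 = ({0,2} : Finset ℕ) := by
  rw [show (2:ℕ) = 1 + 1 from rfl, baldwinStage]
  simp only [stage_n1, borda_new]
  decide

lemma stage_n3 : baldwinStage Pnew 3 = ({0} : Finset ℕ) := by
  rw [show (3:ℕ) = 2 + 1 from rfl, baldwinStage]
  simp only [stage_n2, borda_new]
  decide

lemma stage_n4 : baldwinStage Pnew 4 = ({0} : Finset ℕ) := by
  rw [show (4:ℕ) = 3 + 1 from rfl, baldwinStage]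
  simp only [stage_n3]
  decide

theorem baldwin_violates_PI :
    ∃ (P P' : Profile) (j x : ℕ),
      x ∈ Baldwin P ∧ AddVoter P P' j x ∧ x ∉ Baldwin P' := by
  refine ⟨Pbase, Pnew, 6, 2, ?_, ?_, ?_⟩
  · show (2:ℕ) ∈ baldwinStage Pbase (Pbase.cands.card)
    rw [show Pbase.cands.card = 4 from rfl, stage_b4]; decide
  · refine ⟨rfl, by decide, by decide, fun i hi a b => Iff.rfl, ?_⟩
    show RanksFirst ({0,1,2,3} : Finset ℕ) (fun a b => bal 6 a b) 2
    constructor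
    · decide
    · intro y hy hne
      fin_cases hy <;> simp_all <;> decide
  · show (2:ℕ) ∉ baldwinStage Pnew (Pnew.cands.card)
    rw [show Pnew.cands.card = 4 from rfl, stage_n4]; decide
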